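/- For pairwise distinct real numbers b₁,…,bₙ, the functions x ↦ tanh(x + b_i), i = 1,…,n, are linearly independent as functions ℝ → ℝ. -/

import Mathlib

open Finset Polynomial

lemma tanh_eq_exp (t : ℝ) :
    Real.tanh t = (Real.exp (2*t) - 1) / (Real.exp (2*t) + 1) := by
  rw [Real.tanh_eq_sinh_div_cosh, Real.sinh_eq, Real.cosh_eq, Real.exp_neg]
  have h := Real.exp_ne_zero t
  have h2 : Real.exp (2*t) = Real.exp t * Real.exp t := by
    rw [two_mul, Real.exp_add]
  have hpos : (0:ℝ) < Real.exp (2*t) + 1 := by positivity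
  rw [h2]
  field_simp

theorem tanh_linearIndependent
    {n : ℕ} (b : Fin n → ℝ) (hb : Function.Injective b) :
    LinearIndependent ℝ (fun i => fun x : ℝ => Real.tanh (x + b i)) := by
  rw [Fintype.linearIndependent_iff]
  intro g hg i
  set a : Fin n → ℝ := fun j => Real.exp (2 * b j) with ha
  have ha_pos : ∀ j, 0 < a j := fun j => Real.exp_pos _
  have ha_inj : Function.Injective a := by
    intro j k h
    apply hb
    have := Real.exp_injective h
    linarith
  set P : Polynomial ℝ :=
    ∑ k, C (g k) * (C (a k) * X - 1) * ∏ j ∈ univ.erase k, (C (a j) * X + 1) with hPdef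
  have evalP : ∀ u : ℝ, P.eval u
      = ∑ k, g k * ((a k * u - 1) * ∏ j ∈ univ.erase k, (a j * u + 1)) := by
    intro u
    simp [hPdef, eval_finset_sum, eval_prod, mul_assoc]
  have hP : ∀ u : ℝ, 0 < u → P.eval u = 0 := by
    intro u hu
    obtain ⟨x, hxu⟩ : ∃ x : ℝ, Real.exp (2*x) = u :=
      ⟨Real.log u / 2, by rw [mul_div_cancel₀ _ (two_ne_zero)]; exact Real.exp_log hu⟩
    have hg' := congrFun hg x
    simp only [Finset.sum_apply, Pi.smul_apply, Pi.zero_apply, smul_eq_mul] at hg'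
    rw [evalP]
    have key : ∀ k ∈ univ, g k * ((a k * u - 1) * ∏ j ∈ univ.erase k, (a j * u + 1))
        = (g k * Real.tanh (x + b k)) * ∏ j, (a j * u + 1) := by
      intro k _
      have hden : (0:ℝ) < a k * u + 1 := by
        have := ha_pos k; positivity
      have htanh : Real.tanh (x + b k) = (a k * u - 1) / (a k * u + 1) := by
        rw [tanh_eq_exp]
        have : Real.exp (2 * (x + b k)) = a k * u := by
          rw [ha]; rw [← hxu, ← Real.exp_add]; ring_nf
        rw [this]
      rw [htanh, ← Finset.prod_erase_mul _ _ (mem_univ k)]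
      field_simp
    rw [Finset.sum_congr rfl key, ← Finset.sum_mul, hg', zero_mul]
  have hP0 : P = 0 := by
    apply Polynomial.eq_zero_of_infinite_isRoot
    apply Set.Infinite.mono _ (Set.Ioi_infinite (0:ℝ))
    intro u hu
    exact hP u hu
  have hev : P.eval (-(a i)⁻¹) = 0 := by rw [hP0, eval_zero]
  rw [evalP] at hev
  have hzero : ∀ k ∈ univ, k ≠ i →
      g k * ((a k * (-(a i)⁻¹) - 1) * ∏ j ∈ univ.erase k, (a j * (-(a i)⁻¹) + 1)) = 0 := by
    intro k _ hk
    have : (∏ j ∈ univ.erase k, (a j * (-(a i)⁻¹) + 1)) = 0 := by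
      apply Finset.prod_eq_zero (Finset.mem_erase.mpr ⟨Ne.symm hk, mem_univ i⟩)
      field_simp
      rw [div_self (ne_of_gt (ha_pos i))]; ring
    rw [this, mul_zero, mul_zero]
  rw [Finset.sum_eq_single_of_mem i (mem_univ i) (fun k hk hki => hzero k hk hki)] at hev
  have hai : a i * (-(a i)⁻¹) - 1 = -2 := by
    have hine : a i ≠ 0 := ne_of_gt (ha_pos i)
    field_simp
    ring
  have hprod : (∏ j ∈ univ.erase i, (a j * (-(a i)⁻¹) + 1)) ≠ 0 := by
    rw [Finset.prod_ne_zero_iff]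
    intro j hj
    have hji : j ≠ i := (Finset.mem_erase.mp hj).1
    have hne : a j ≠ a i := fun h => hji (ha_inj h)
    have hine : (a i) ≠ 0 := ne_of_gt (ha_pos i)
    intro h
    apply hne
    field_simp at h
    linarith
  rw [hai] at hev
  have := mul_ne_zero (by norm_num : (-2:ℝ) ≠ 0) hprod
  rcases mul_eq_zero.mp hev with h | h
  · exact h
  · exact absurd h this
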